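/- The state |ψ⟩ = ∑_{\{g^r_i\}} exp(iπ ∑_{r=0}^{L-1} ∑_{1≤i<j≤q} P_{ij}(g^r_j − g^{r−1}_j) g^r_i) |{g^r_i}⟩ on the periodic chain satisfies O^r_α |ψ⟩ = |ψ⟩ for every r and α, where O^r_α are the cocycle stabilizers defined above. In particular, flipping g^r_α via X^r_α changes the coefficient by exactly the phase produced by ∏_{k<α}(Z^{r+1}_k Z^r_k)^{P_{kα}} ∏_{l>α}(Z^r_l Z^{r−1}_l)^{P_{αl}}. -/

import Mathlib

open Matrix

/-- Pauli `Z` on site `s` of the periodic chain. -/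
noncomputable def Zop (L q : ℕ) [NeZero L] (s : ZMod L × Fin q) :
    Matrix ((ZMod L × Fin q) → Fin 2) ((ZMod L × Fin q) → Fin 2) ℂ :=
  Matrix.diagonal (fun x => (-1 : ℂ) ^ ((x s : ℕ)))

/-- Pauli `X` on site `s` of the periodic chain. -/
noncomputable def Xop (L q : ℕ) [NeZero L] (s : ZMod L × Fin q) :
    Matrix ((ZMod L × Fin q) → Fin 2) ((ZMod L × Fin q) → Fin 2) ℂ :=
  fun x y => if x = Function.update y s (1 - y s) then 1 else 0

/-- The cocycle stabilizer
`O^r_α = ∏_{k<α}(Z^{r+1}_k Z^r_k)^{P_{kα}} · X^r_α · ∏_{α<l}(Z^r_l Z^{r−1}_l)^{P_{αl}}`,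
written as the (diagonal) product of its `Z` factors times its `X` factor. -/
noncomputable def Ocal (L q : ℕ) [NeZero L] (P : Fin q → Fin q → ℕ)
    (r : ZMod L) (α : Fin q) :
    Matrix ((ZMod L × Fin q) → Fin 2) ((ZMod L × Fin q) → Fin 2) ℂ :=
  Matrix.diagonal (fun x =>
      (∏ k ∈ Finset.univ.filter (fun k : Fin q => k < α),
        (-1 : ℂ) ^ (P k α * ((x (r + 1, k) : ℕ) + (x (r, k) : ℕ))))
      * ∏ l ∈ Finset.univ.filter (fun l : Fin q => α < l),
        (-1 : ℂ) ^ (P α l * ((x (r, l) : ℕ) + (x (r - 1, l) : ℕ))))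
    * Xop L q (r, α)

/- ===================  auxiliary lemmas  =================== -/

lemma fin2_flip : ∀ a : Fin 2, (1 : Fin 2) - (1 - a) = a := by decide

lemma update_flip_flip {L q : ℕ} [NeZero L] (x : (ZMod L × Fin q) → Fin 2) (s : ZMod L × Fin q) :
    Function.update (Function.update x s (1 - x s)) s
      (1 - (Function.update x s (1 - x s)) s) = x := by
  rw [Function.update_self, Function.update_idem, fin2_flip, Function.update_eq_self]

lemma Xop_eq {L q : ℕ} [NeZero L] (s : ZMod L × Fin q) (x y) :
    Xop L q s x y = if y = Function.update x s (1 - x s) then 1 else 0 := by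
  unfold Xop
  congr 1
  simp only [eq_iff_iff]
  constructor
  · rintro rfl; rw [update_flip_flip]
  · rintro rfl; rw [update_flip_flip]

/-- The diagonal coefficient (as an integer exponent is not needed; keep ℕ). -/
lemma Ocal_mulVec {L q : ℕ} [NeZero L] (P : Fin q → Fin q → ℕ) (r : ZMod L) (α : Fin q)
    (ψ : ((ZMod L × Fin q) → Fin 2) → ℂ) (x : (ZMod L × Fin q) → Fin 2) :
    (Ocal L q P r α).mulVec ψ x =
      ((-1 : ℂ) ^ ((∑ k ∈ Finset.univ.filter (fun k : Fin q => k < α),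
          P k α * ((x (r + 1, k) : ℕ) + (x (r, k) : ℕ)))
        + ∑ l ∈ Finset.univ.filter (fun l : Fin q => α < l),
          P α l * ((x (r, l) : ℕ) + (x (r - 1, l) : ℕ))))
      * ψ (Function.update x (r, α) (1 - x (r, α))) := by
  unfold Ocal
  rw [Matrix.mulVec, pow_add]
  simp only [dotProduct, Matrix.diagonal_mul, Xop_eq]
  rw [Finset.sum_congr rfl (fun y _ => by
    rw [mul_ite, mul_one, mul_zero, ite_mul, zero_mul])]
  rw [Finset.sum_ite_eq' Finset.univ (Function.update x (r, α) (1 - x (r, α)))]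
  simp only [Finset.mem_univ, if_true]
  rw [Finset.prod_pow_eq_pow_sum, Finset.prod_pow_eq_pow_sum]

/-- integer-valued phase exponent of the wavefunction -/
def Nint {L q : ℕ} [NeZero L] (P : Fin q → Fin q → ℕ) (x : (ZMod L × Fin q) → Fin 2) : ℤ :=
  ∑ r : ZMod L, ∑ p ∈ Finset.univ.filter (fun p : Fin q × Fin q => p.1 < p.2),
      (P p.1 p.2 : ℤ) * (((x (r, p.2) : ℕ) : ℤ) - ((x (r - 1, p.2) : ℕ) : ℤ))
        * ((x (r, p.1) : ℕ) : ℤ)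

lemma psi_eq {L q : ℕ} [NeZero L] (P : Fin q → Fin q → ℕ)
    (ψ : ((ZMod L × Fin q) → Fin 2) → ℂ)
    (hψ : ∀ x, ψ x = Complex.exp ((Real.pi : ℂ) * Complex.I *
      ∑ r : ZMod L,
        ∑ p ∈ Finset.univ.filter (fun p : Fin q × Fin q => p.1 < p.2),
          (P p.1 p.2 : ℂ) *
            (((x (r, p.2) : ℕ) : ℂ) - ((x (r - 1, p.2) : ℕ) : ℂ)) *
            ((x (r, p.1) : ℕ) : ℂ)))
    (x : (ZMod L × Fin q) → Fin 2) :
    ψ x = (-1 : ℂ) ^ (Nint P x) := by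
  rw [hψ]
  have : ((Nint P x : ℤ) : ℂ) = ∑ r : ZMod L,
        ∑ p ∈ Finset.univ.filter (fun p : Fin q × Fin q => p.1 < p.2),
          (P p.1 p.2 : ℂ) *
            (((x (r, p.2) : ℕ) : ℂ) - ((x (r - 1, p.2) : ℕ) : ℂ)) *
            ((x (r, p.1) : ℕ) : ℂ) := by
    unfold Nint
    push_cast
    rfl
  rw [← this, mul_comm ((Real.pi : ℂ) * Complex.I), Complex.exp_int_mul,
    Complex.exp_pi_mul_I]

lemma neg_one_zpow_congr (a b : ℤ) (h : (a : ZMod 2) = (b : ZMod 2)) :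
    (-1 : ℂ) ^ a = (-1 : ℂ) ^ b := by
  have h2 : (2 : ℤ) ∣ b - a := ((ZMod.intCast_eq_intCast_iff _ _ _).mp h).dvd
  obtain ⟨k, hk⟩ := h2
  have hb : b = a + 2 * k := by linarith
  rw [hb, zpow_add₀ (by norm_num : (-1 : ℂ) ≠ 0), _root_.zpow_mul]
  norm_num

lemma sum_ind {β : Type*} [Fintype β] [DecidableEq β] (b : β) (f : β → ZMod 2) :
    ∑ a : β, (if a = b then 1 else 0) * f a = f b := by
  simp [ite_mul, zero_mul, one_mul]

lemma sum_pairs_snd {q : ℕ} (α : Fin q) (f : Fin q → ZMod 2) :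
    ∑ p ∈ Finset.univ.filter (fun p : Fin q × Fin q => p.1 < p.2),
      (if p.2 = α then f p.1 else 0)
    = ∑ k ∈ Finset.univ.filter (fun k : Fin q => k < α), f k := by
  rw [Finset.sum_filter, Finset.sum_filter, Fintype.sum_prod_type]
  apply Finset.sum_congr rfl
  intro a _
  have : ∀ b : Fin q, (if a < b then if b = α then f a else 0 else 0)
      = if b = α then (if a < α then f a else 0) else 0 := by
    intro b
    rcases eq_or_ne b α with h | h
    · subst h; by_cases hab : a < b <;> simp [hab]
    · simp [h]
  simp only [this]
  rw [Finset.sum_ite_eq' Finset.univ α]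
  simp

lemma sum_pairs_fst {q : ℕ} (α : Fin q) (f : Fin q → ZMod 2) :
    ∑ p ∈ Finset.univ.filter (fun p : Fin q × Fin q => p.1 < p.2),
      (if p.1 = α then f p.2 else 0)
    = ∑ l ∈ Finset.univ.filter (fun l : Fin q => α < l), f l := by
  rw [Finset.sum_filter, Finset.sum_filter, Fintype.sum_prod_type]
  rw [show (fun a => ∑ b : Fin q, if a < b then if a = α then f b else 0 else 0)
      = fun a => if a = α then (∑ b : Fin q, if α < b then f b else 0) else 0 from
    funext fun a => by
      rcases eq_or_ne a α with h | h
      · subst h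
        rw [if_pos rfl]
        apply Finset.sum_congr rfl
        intro b _
        by_cases hab : a < b <;> simp [hab]
      · simp [h]]
  rw [Finset.sum_ite_eq' Finset.univ α]
  simp

/-- The key parity computation, in `ZMod 2`. -/
lemma key_parity {L q : ℕ} [NeZero L] (P : Fin q → Fin q → ℕ) (r : ZMod L) (α : Fin q)
    (X : (ZMod L × Fin q) → ZMod 2) :
    ((∑ k ∈ Finset.univ.filter (fun k : Fin q => k < α),
        (P k α : ZMod 2) * (X (r + 1, k) + X (r, k)))
      + ∑ l ∈ Finset.univ.filter (fun l : Fin q => α < l),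
        (P α l : ZMod 2) * (X (r, l) + X (r - 1, l)))
    + ∑ r' : ZMod L, ∑ p ∈ Finset.univ.filter (fun p : Fin q × Fin q => p.1 < p.2),
        (P p.1 p.2 : ZMod 2)
          * ((X (r', p.2) + (if (r', p.2) = (r, α) then 1 else 0))
              - (X (r' - 1, p.2) + (if (r' - 1, p.2) = (r, α) then 1 else 0)))
          * (X (r', p.1) + (if (r', p.1) = (r, α) then 1 else 0))
    = ∑ r' : ZMod L, ∑ p ∈ Finset.univ.filter (fun p : Fin q × Fin q => p.1 < p.2),
        (P p.1 p.2 : ZMod 2) * (X (r', p.2) - X (r' - 1, p.2)) * (X (r', p.1)) := by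
  classical
  simp only [CharTwo.sub_eq_add]
  have expand : ∀ (r' : ZMod L) (p : Fin q × Fin q),
      (P p.1 p.2 : ZMod 2)
          * ((X (r', p.2) + (if (r', p.2) = (r, α) then 1 else 0))
              + (X (r' - 1, p.2) + (if (r' - 1, p.2) = (r, α) then 1 else 0)))
          * (X (r', p.1) + (if (r', p.1) = (r, α) then 1 else 0))
      = (P p.1 p.2 : ZMod 2) * (X (r', p.2) + X (r' - 1, p.2)) * X (r', p.1)
        + ((P p.1 p.2 : ZMod 2)
            * ((if (r', p.2) = (r, α) then 1 else 0) + (if (r' - 1, p.2) = (r, α) then 1 else 0))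
            * X (r', p.1)
          + ((P p.1 p.2 : ZMod 2) * (X (r', p.2) + X (r' - 1, p.2))
              * (if (r', p.1) = (r, α) then 1 else 0)
            + (P p.1 p.2 : ZMod 2)
              * ((if (r', p.2) = (r, α) then 1 else 0) + (if (r' - 1, p.2) = (r, α) then 1 else 0))
              * (if (r', p.1) = (r, α) then 1 else 0))) := by
    intros; ring
  rw [Finset.sum_congr rfl (fun r' _ => Finset.sum_congr rfl (fun p _ => expand r' p))]
  simp only [Finset.sum_add_distrib]
  have hS3 : ∑ r' : ZMod L, ∑ p ∈ Finset.univ.filter (fun p : Fin q × Fin q => p.1 < p.2),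
      (P p.1 p.2 : ZMod 2)
        * ((if (r', p.2) = (r, α) then 1 else 0) + (if (r' - 1, p.2) = (r, α) then 1 else 0))
        * (if (r', p.1) = (r, α) then 1 else 0) = 0 := by
    apply Finset.sum_eq_zero; intro r' _
    apply Finset.sum_eq_zero; intro p hp
    rcases eq_or_ne p.1 α with h1 | h1
    · have h2 : p.2 ≠ α := by
        have hlt := (Finset.mem_filter.mp hp).2
        intro hc; rw [h1, hc] at hlt; exact lt_irrefl _ hlt
      simp [Prod.ext_iff, h2]
    · simp [Prod.ext_iff, h1]
  have hS1 : ∑ r' : ZMod L, ∑ p ∈ Finset.univ.filter (fun p : Fin q × Fin q => p.1 < p.2),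
      (P p.1 p.2 : ZMod 2)
        * ((if (r', p.2) = (r, α) then 1 else 0) + (if (r' - 1, p.2) = (r, α) then 1 else 0))
        * X (r', p.1)
      = ∑ k ∈ Finset.univ.filter (fun k : Fin q => k < α),
          (P k α : ZMod 2) * (X (r + 1, k) + X (r, k)) := by
    rw [Finset.sum_comm]
    have inner : ∀ p : Fin q × Fin q, ∑ r' : ZMod L,
        (P p.1 p.2 : ZMod 2)
          * ((if (r', p.2) = (r, α) then 1 else 0) + (if (r' - 1, p.2) = (r, α) then 1 else 0))
          * X (r', p.1)
        = if p.2 = α then (P p.1 α : ZMod 2) * (X (r + 1, p.1) + X (r, p.1)) else 0 := by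
      intro p
      rcases eq_or_ne p.2 α with h2 | h2
      · rw [if_pos h2]
        have step : ∀ r' : ZMod L,
            (P p.1 p.2 : ZMod 2)
              * ((if (r', p.2) = (r, α) then 1 else 0) + (if (r' - 1, p.2) = (r, α) then 1 else 0))
              * X (r', p.1)
            = (if r' = r then 1 else 0) * ((P p.1 p.2 : ZMod 2) * X (r', p.1))
              + (if r' = r + 1 then 1 else 0) * ((P p.1 p.2 : ZMod 2) * X (r', p.1)) := by
          intro r'
          have e1 : ((r', p.2) = (r, α)) = (r' = r) := by
            simp [Prod.ext_iff, h2]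
          have e2 : ((r' - 1, p.2) = (r, α)) = (r' = r + 1) := by
            simp only [Prod.ext_iff, h2, and_true, eq_iff_iff]
            constructor
            · intro h; rw [← h]; ring
            · intro h; rw [h]; ring
          simp only [e1, e2]; ring
        rw [Finset.sum_congr rfl (fun r' _ => step r'), Finset.sum_add_distrib,
          sum_ind r, sum_ind (r + 1), h2]
        ring
      · rw [if_neg h2]
        apply Finset.sum_eq_zero
        intro r' _
        simp [Prod.ext_iff, h2]
    rw [Finset.sum_congr rfl (fun p _ => inner p)]
    rw [sum_pairs_snd α (fun k => (P k α : ZMod 2) * (X (r + 1, k) + X (r, k)))]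
  have hS2 : ∑ r' : ZMod L, ∑ p ∈ Finset.univ.filter (fun p : Fin q × Fin q => p.1 < p.2),
      (P p.1 p.2 : ZMod 2) * (X (r', p.2) + X (r' - 1, p.2))
        * (if (r', p.1) = (r, α) then 1 else 0)
      = ∑ l ∈ Finset.univ.filter (fun l : Fin q => α < l),
          (P α l : ZMod 2) * (X (r, l) + X (r - 1, l)) := by
    rw [Finset.sum_comm]
    have inner : ∀ p : Fin q × Fin q, ∑ r' : ZMod L,
        (P p.1 p.2 : ZMod 2) * (X (r', p.2) + X (r' - 1, p.2))
          * (if (r', p.1) = (r, α) then 1 else 0)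
        = if p.1 = α then (P α p.2 : ZMod 2) * (X (r, p.2) + X (r - 1, p.2)) else 0 := by
      intro p
      rcases eq_or_ne p.1 α with h1 | h1
      · rw [if_pos h1]
        have step : ∀ r' : ZMod L,
            (P p.1 p.2 : ZMod 2) * (X (r', p.2) + X (r' - 1, p.2))
              * (if (r', p.1) = (r, α) then 1 else 0)
            = (if r' = r then 1 else 0)
                * ((P p.1 p.2 : ZMod 2) * (X (r', p.2) + X (r' - 1, p.2))) := by
          intro r'
          have e1 : ((r', p.1) = (r, α)) = (r' = r) := by
            simp [Prod.ext_iff, h1]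
          simp only [e1]; ring
        rw [Finset.sum_congr rfl (fun r' _ => step r'), sum_ind r, h1]
      · rw [if_neg h1]
        apply Finset.sum_eq_zero
        intro r' _
        simp [Prod.ext_iff, h1]
    rw [Finset.sum_congr rfl (fun p _ => inner p)]
    rw [sum_pairs_fst α (fun l => (P α l : ZMod 2) * (X (r, l) + X (r - 1, l)))]
  rw [hS1, hS2, hS3, add_zero]
  have htwo : ∀ a : ZMod 2, a + a = 0 := fun a => CharTwo.add_self_eq_zero a
  generalize (∑ k ∈ Finset.univ.filter (fun k : Fin q => k < α),
          (P k α : ZMod 2) * (X (r + 1, k) + X (r, k))) = A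
  generalize (∑ l ∈ Finset.univ.filter (fun l : Fin q => α < l),
          (P α l : ZMod 2) * (X (r, l) + X (r - 1, l))) = B
  generalize (∑ r' : ZMod L, ∑ p ∈ Finset.univ.filter (fun p : Fin q × Fin q => p.1 < p.2),
        (P p.1 p.2 : ZMod 2) * (X (r', p.2) + X (r' - 1, p.2)) * X (r', p.1)) = C
  linear_combination htwo A + htwo B

theorem cocycle_state_stabilized (L q : ℕ) [NeZero L]
    (P : Fin q → Fin q → ℕ) (hP : ∀ i j, P i j ≤ 1)
    (ψ : ((ZMod L × Fin q) → Fin 2) → ℂ)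
    (hψ : ∀ x, ψ x = Complex.exp ((Real.pi : ℂ) * Complex.I *
      ∑ r : ZMod L,
        ∑ p ∈ Finset.univ.filter (fun p : Fin q × Fin q => p.1 < p.2),
          (P p.1 p.2 : ℂ) *
            (((x (r, p.2) : ℕ) : ℂ) - ((x (r - 1, p.2) : ℕ) : ℂ)) *
            ((x (r, p.1) : ℕ) : ℂ))) :
    ∀ (r : ZMod L) (α : Fin q), (Ocal L q P r α).mulVec ψ = ψ := by
  intro r α
  funext x
  rw [Ocal_mulVec, psi_eq P ψ hψ, psi_eq P ψ hψ]
  set y : (ZMod L × Fin q) → Fin 2 := Function.update x (r, α) (1 - x (r, α)) with hy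
  rw [← zpow_natCast (-1 : ℂ), ← zpow_add₀ (by norm_num : (-1 : ℂ) ≠ 0)]
  apply neg_one_zpow_congr
  -- now a parity statement in ZMod 2
  have hyv : ∀ s, (((y s : ℕ) : ZMod 2))
      = ((x s : ℕ) : ZMod 2) + (if s = (r, α) then 1 else 0) := by
    intro s
    rcases eq_or_ne s (r, α) with h | h
    · subst h
      rw [hy, Function.update_self, if_pos rfl]
      generalize x (r, α) = a
      revert a; decide
    · rw [hy, Function.update_of_ne h, if_neg h, add_zero]
  push_cast [Nint]
  rw [Finset.sum_congr rfl (fun r' _ => Finset.sum_congr rfl (fun p _ => by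
    rw [hyv (r', p.2), hyv (r' - 1, p.2), hyv (r', p.1)]))]
  exact key_parity P r α (fun s => ((x s : ℕ) : ZMod 2))
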